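/- Linearization progress under the Polyak stepsize: under the setting of the context, with γ ∈ (0, 1] and γ_k := γ·(h(z) − h(z*))/‖Π_A v‖², one has ‖z − γ_k·P(A,λ)v − z*‖² ≤ ‖z − z*‖² − γ·(h(z) − h(z*))²/‖Π_A v‖² + 2·γ_k·⟨v − P(A,λ)v, z − z*⟩. -/

import Mathlib

open scoped RealInnerProductSpace

noncomputable section

variable {E Y : Type*} [NormedAddCommGroup E] [InnerProductSpace ℝ E] [FiniteDimensional ℝ E]
  [NormedAddCommGroup Y] [InnerProductSpace ℝ Y] [FiniteDimensional ℝ Y]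

/-- `v` is a subgradient of `h` at `z`. -/
def IsSubgradientAt (h : Y → ℝ) (v z : Y) : Prop :=
  ∀ y : Y, h z + ⟪v, y - z⟫ ≤ h y

/-- `B(A,λ) = (A*∘A + λ·id)⁻¹`. -/
def Bop (A : E →L[ℝ] Y) (lam : ℝ) : E →L[ℝ] E :=
  (ContinuousLinearMap.adjoint A ∘L A + lam • ContinuousLinearMap.id ℝ E).inverse

/-- `P(A,λ) = A ∘ B(A,λ) ∘ A*`. -/
def Pop (A : E →L[ℝ] Y) (lam : ℝ) : Y →L[ℝ] Y :=
  A ∘L Bop A lam ∘L ContinuousLinearMap.adjoint A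

/-- `Π_A`, the orthogonal projection of `Y` onto the range of `A`. -/
def projRange (A : E →L[ℝ] Y) : Y →L[ℝ] Y :=
  (LinearMap.range (A : E →ₗ[ℝ] Y)).subtypeL ∘L
    Submodule.orthogonalProjectionOnto (LinearMap.range (A : E →ₗ[ℝ] Y))

lemma Top_Bop (A : E →L[ℝ] Y) (lam : ℝ) (hlam : 0 < lam) (x : E) :
    (ContinuousLinearMap.adjoint A ∘L A + lam • ContinuousLinearMap.id ℝ E) (Bop A lam x) = x := by
  set T := ContinuousLinearMap.adjoint A ∘L A + lam • ContinuousLinearMap.id ℝ E with hT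
  have key : ∀ u : E, T u = 0 → u = 0 := by
    intro u hu
    have h1 : ⟪T u, u⟫ = 0 := by rw [hu]; simp
    have h2 : ⟪T u, u⟫ = ‖A u‖ ^ 2 + lam * ‖u‖ ^ 2 := by
      simp [hT, ContinuousLinearMap.add_apply, inner_add_left,
        ContinuousLinearMap.adjoint_inner_left, real_inner_smul_left,
        real_inner_self_eq_norm_sq]
    have h3 : ‖A u‖ ^ 2 + lam * ‖u‖ ^ 2 = 0 := by rw [← h2, h1]
    have hnu : ‖u‖ ^ 2 = 0 := by nlinarith [sq_nonneg ‖A u‖, sq_nonneg ‖u‖]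
    simpa using hnu
  have hinj : Function.Injective T.toLinearMap := by
    intro a b hab
    exact sub_eq_zero.mp (key _ (by rw [map_sub]; simpa [sub_eq_zero] using hab))
  have hsurj : Function.Surjective T.toLinearMap :=
    (LinearMap.injective_iff_surjective).mp hinj
  let e' : E ≃ₗ[ℝ] E := LinearEquiv.ofBijective T.toLinearMap ⟨hinj, hsurj⟩
  let e : E ≃L[ℝ] E := e'.toContinuousLinearEquiv
  have hcoe : (e : E →L[ℝ] E) = T := by ext u; rfl
  have hB : Bop A lam = (e.symm : E →L[ℝ] E) := by
    show T.inverse = _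
    rw [← hcoe, ContinuousLinearMap.inverse_equiv]
  rw [hB, ← hcoe]
  simp

lemma adjoint_projRange (A : E →L[ℝ] Y) (v : Y) :
    ContinuousLinearMap.adjoint A v = ContinuousLinearMap.adjoint A (projRange A v) := by
  have hmem : v - projRange A v ∈ (LinearMap.range (A : E →ₗ[ℝ] Y))ᗮ :=
    Submodule.sub_starProjection_mem_orthogonal (K := LinearMap.range (A : E →ₗ[ℝ] Y)) v
  have h0 : ContinuousLinearMap.adjoint A (v - projRange A v) = 0 := by
    rw [← inner_self_eq_zero (𝕜 := ℝ), ContinuousLinearMap.adjoint_inner_left]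
    exact (Submodule.mem_orthogonal' _ _).mp hmem _ ⟨_, rfl⟩
  have h1 := map_sub (ContinuousLinearMap.adjoint A) v (projRange A v)
  rw [h0] at h1
  exact sub_eq_zero.mp h1.symm

lemma norm_Pop_le (A : E →L[ℝ] Y) (lam : ℝ) (hlam : 0 < lam) (v : Y) :
    ‖Pop A lam v‖ ≤ ‖projRange A v‖ := by
  set w := projRange A v with hw
  set u := Bop A lam (ContinuousLinearMap.adjoint A v) with hu
  have hPv : Pop A lam v = A u := rfl
  have hT := Top_Bop A lam hlam (ContinuousLinearMap.adjoint A v)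
  have hTu : ContinuousLinearMap.adjoint A (A u) + lam • u = ContinuousLinearMap.adjoint A v := by
    simpa [ContinuousLinearMap.add_apply] using hT
  have hmem : v - w ∈ (LinearMap.range (A : E →ₗ[ℝ] Y))ᗮ :=
    Submodule.sub_starProjection_mem_orthogonal (K := LinearMap.range (A : E →ₗ[ℝ] Y)) v
  have hvw : (inner ℝ v (A u) : ℝ) = inner ℝ w (A u) := by
    have h0 : (inner ℝ (v - w) (A u) : ℝ) = 0 :=
      (Submodule.mem_orthogonal' _ _).mp hmem _ ⟨u, rfl⟩
    rw [inner_sub_left] at h0; linarith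
  have hin : ‖A u‖ ^ 2 + lam * ‖u‖ ^ 2 = ⟪w, A u⟫ := by
    have h2 := congrArg (fun x => (inner ℝ x u : ℝ)) hTu
    simp only [inner_add_left, ContinuousLinearMap.adjoint_inner_left, real_inner_smul_left,
      real_inner_self_eq_norm_sq] at h2
    rw [← hvw]; linarith
  have hle : ‖A u‖ ^ 2 ≤ ‖w‖ * ‖A u‖ := by
    calc ‖A u‖ ^ 2 ≤ ‖A u‖ ^ 2 + lam * ‖u‖ ^ 2 := by nlinarith [sq_nonneg ‖u‖]
    _ = ⟪w, A u⟫ := hin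
    _ ≤ ‖w‖ * ‖A u‖ := real_inner_le_norm _ _
  rw [hPv]
  nlinarith [norm_nonneg (A u), norm_nonneg w]

/-- Linearization progress under the Polyak stepsize. -/
theorem lmm_linearization_progress
    (h : Y → ℝ) (hconv : ConvexOn ℝ Set.univ h)
    (A : E →L[ℝ] Y) (lam : ℝ) (hlam : 0 < lam)
    (z zs : Y) (hzs : h zs ≤ h z)
    (v : Y) (hv : IsSubgradientAt h v z) (hPiv : projRange A v ≠ 0)
    (γ : ℝ) (hγ0 : 0 < γ) (hγ1 : γ ≤ 1)
    (γk : ℝ) (hγk : γk = γ * (h z - h zs) / ‖projRange A v‖ ^ 2) :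
    ‖z - γk • Pop A lam v - zs‖ ^ 2 ≤
      ‖z - zs‖ ^ 2 - γ * (h z - h zs) ^ 2 / ‖projRange A v‖ ^ 2 +
        2 * γk * ⟪v - Pop A lam v, z - zs⟫ := by
  set p := Pop A lam v with hp
  set Δ := h z - h zs with hΔdef
  set n := ‖projRange A v‖ ^ 2 with hn
  have hΔ : 0 ≤ Δ := by simp [hΔdef]; linarith
  have hnpos : 0 < n := by
    have : 0 < ‖projRange A v‖ := norm_pos_iff.mpr hPiv
    positivity
  have hI : Δ ≤ ⟪v, z - zs⟫ := by
    have := hv zs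
    have hsub : ⟪v, zs - z⟫ = -⟪v, z - zs⟫ := by
      rw [← inner_neg_right]; congr 1; abel
    rw [hsub] at this
    linarith
  have hkn : γk * n = γ * Δ := by
    rw [hγk]; field_simp
  have hγknn : 0 ≤ γk := by
    rw [hγk]; positivity
  have hpn : ‖p‖ ^ 2 ≤ n := by
    have := norm_Pop_le A lam hlam v
    rw [hn]
    nlinarith [norm_nonneg p, norm_nonneg (projRange A v)]
  have hdiv : γ * Δ ^ 2 / n = γk * Δ := by
    field_simp
    nlinarith [hkn]
  have hexp : ‖z - γk • p - zs‖ ^ 2 =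
      ‖z - zs‖ ^ 2 - 2 * (γk * ⟪z - zs, p⟫) + γk ^ 2 * ‖p‖ ^ 2 := by
    have : z - γk • p - zs = (z - zs) - γk • p := by abel
    rw [this, norm_sub_sq_real, real_inner_smul_right, norm_smul]
    simp [mul_pow, sq_abs]
  rw [hexp, hdiv]
  have hsplit : ⟪v - p, z - zs⟫ = ⟪v, z - zs⟫ - ⟪p, z - zs⟫ := inner_sub_left _ _ _
  rw [hsplit]
  have hcomm : ⟪z - zs, p⟫ = ⟪p, z - zs⟫ := real_inner_comm _ _
  rw [hcomm]
  nlinarith [mul_le_mul_of_nonneg_left hpn (sq_nonneg γk), sq_nonneg γk,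
    mul_le_mul_of_nonneg_left hI hγknn, mul_nonneg hγknn hΔ, mul_nonneg (mul_nonneg hγknn hγknn) hΔ]
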